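/- Let A be a right-symmetric algebra over a commutative ring K, let U be a K-module, and let ∪ : A × U → A be a K-bilinear map satisfying a∘(b∪u) = (a∘b)∪u for all a, b ∈ A and u ∈ U. Suppose that every element of A can be written as z∪u for some z in the left center Z(A) and some u ∈ U. Then for any a_1, …, a_{n-1} in the left normalizer N(Z(A)), any a_n ∈ A, and any a ∈ A, the left-normed product satisfies a_1∘(a_2∘(⋯(a_{n-1}∘(a_n∘a))⋯)) = (a_1∘(a_2∘(⋯(a_{n-1}∘a_n)⋯)))∘a. -/

import Mathlib

/-- let `A` be a right-symmetric algebra over `K`, `U` a `K`-module and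
`∪ : A × U → A` a bilinear pairing with `a∘(b∪u) = (a∘b)∪u`.  If every element of `A`
is of the form `z∪u` with `z` in the left center, then for any `a_1, …, a_{n-1}` in the
left normalizer `N(Z(A))` (the list `l`), any `a_n ∈ A` and any `a ∈ A`,
`a_1∘(a_2∘(⋯(a_{n-1}∘(a_n∘a))⋯)) = (a_1∘(a_2∘(⋯(a_{n-1}∘a_n)⋯)))∘a`. -/
theorem leftNormed_product_via_cup {K A U : Type*} [CommRing K]
    [AddCommGroup A] [Module K A] [AddCommGroup U] [Module K U]
    (mul : A →ₗ[K] A →ₗ[K] A)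
    (hrs : ∀ a b c : A, mul a (mul b c) - mul (mul a b) c
      = mul a (mul c b) - mul (mul a c) b)
    (cup : A →ₗ[K] U →ₗ[K] A)
    (hcup : ∀ (a b : A) (u : U), mul a (cup b u) = cup (mul a b) u)
    (hsurj : ∀ x : A, ∃ (z : A) (u : U), (∀ b : A, mul z b = 0) ∧ x = cup z u)
    (l : List A)
    (hl : ∀ x ∈ l, ∀ z : A, (∀ b : A, mul z b = 0) → ∀ b : A, mul (mul x z) b = 0)
    (aₙ a : A) :
    l.foldr (fun x y => mul x y) (mul aₙ a) = mul (l.foldr (fun x y => mul x y) aₙ) a := by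
  -- key lemma: for x in the normalizer, mul is "associative" on x
  have key : ∀ x : A, (∀ z : A, (∀ b : A, mul z b = 0) → ∀ b : A, mul (mul x z) b = 0) →
      ∀ b c : A, mul x (mul b c) = mul (mul x b) c := by
    intro x hx b c
    -- first the case c = z central
    have hcentral : ∀ z : A, (∀ b' : A, mul z b' = 0) → ∀ b' : A,
        mul x (mul b' z) = mul (mul x b') z := by
      intro z hz b'
      have h := hrs x b' z
      rw [hz b', map_zero, hx z hz b'] at h
      -- h : mul x (mul b' z) - mul (mul x b') z = 0 - 0
      simpa [sub_eq_zero] using h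
    obtain ⟨z, u, hz, rfl⟩ := hsurj c
    rw [hcup b z u, hcup x (mul b z) u, hcup (mul x b) z u, hcentral z hz b]
  induction l with
  | nil => rfl
  | cons x l ih =>
    have hx := hl x List.mem_cons_self
    simp only [List.foldr_cons]
    rw [ih (fun y hy => hl y (List.mem_cons_of_mem _ hy)), key x hx]
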